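/- Let k be a field of characteristic zero and G a finite group. Every finite-dimensional k-linear representation V of G with V ≠ 0 contains the trivial representation as a direct summand of the tensor power V^{⊗|G|}. -/

import Mathlib

open CategoryTheory MonoidalCategory

/-- `n`-th tensor power of an object in a monoidal category. -/
noncomputable def FDRep.tensorPow {k G : Type u} [Field k] [Group G] (V : FDRep k G) : ℕ → FDRep k G
  | 0 => 𝟙_ (FDRep k G)
  | n + 1 => FDRep.tensorPow V n ⊗ V

namespace TrivSummandAux

variable {k G : Type u} [Field k] [Group G]

/-- `w ⊗ w ⊗ ... ⊗ w` in the `n`-th tensor power. -/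
noncomputable def tpowEl (V : FDRep k G) (w : V) : (n : ℕ) → (FDRep.tensorPow V n : Type u)
  | 0 => (1 : k)
  | n + 1 => (TensorProduct.tmul k (tpowEl V w n) w :
      TensorProduct k (FDRep.tensorPow V n) V)

lemma tpowEl_equivariant (V : FDRep k G) (w : V) (g : G) :
    ∀ n : ℕ, (FDRep.tensorPow V n).ρ g (tpowEl V w n) = tpowEl V (V.ρ g w) n
  | 0 => rfl
  | n + 1 => by
    show (FDRep.tensorPow V n ⊗ V).ρ g (TensorProduct.tmul k (tpowEl V w n) w) = _
    show TensorProduct.tmul k ((FDRep.tensorPow V n).ρ g (tpowEl V w n)) (V.ρ g w) = _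
    rw [tpowEl_equivariant V w g n]
    rfl

/-- Tensor product of dual functionals as a functional on the tensor power. -/
noncomputable def finDual (V : FDRep k G) : (n : ℕ) → (Fin n → (V →ₗ[k] k)) →
    ((FDRep.tensorPow V n : Type u) →ₗ[k] k)
  | 0, _ => LinearMap.id
  | n + 1, fs =>
      (TensorProduct.lift (((LinearMap.mul k k).compl₁₂
        (finDual V n (fs ∘ Fin.castSucc)) (fs (Fin.last n)))) :
        TensorProduct k (FDRep.tensorPow V n) V →ₗ[k] k)

lemma finDual_tpowEl (V : FDRep k G) (w : V) :
    ∀ (n : ℕ) (fs : Fin n → (V →ₗ[k] k)),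
      finDual V n fs (tpowEl V w n) = ∏ i, fs i w
  | 0, fs => rfl
  | n + 1, fs => by
    have key : finDual V (n+1) fs (tpowEl V w (n+1)) =
        finDual V n (fs ∘ Fin.castSucc) (tpowEl V w n) * fs (Fin.last n) w := by
      show (TensorProduct.lift _) (TensorProduct.tmul k (tpowEl V w n) w) = _
      rw [TensorProduct.lift.tmul]
      rfl
    rw [key, finDual_tpowEl V w n, Fin.prod_univ_castSucc]
    rfl

end TrivSummandAux

open TrivSummandAux in
/-- over a field of characteristic zero, every nonzero
finite-dimensional representation `V` of a finite group `G` contains the trivial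
representation as a direct summand of `V^{⊗|G|}`. -/
theorem trivial_rep_summand_of_tensor_pow_card
    {k G : Type u} [Field k] [CharZero k] [Group G] [Fintype G]
    (V : FDRep k G) (hV : ¬ CategoryTheory.Limits.IsZero V) :
    ∃ (s : 𝟙_ (FDRep k G) ⟶ FDRep.tensorPow V (Fintype.card G))
      (r : FDRep.tensorPow V (Fintype.card G) ⟶ 𝟙_ (FDRep k G)),
      s ≫ r = 𝟙 (𝟙_ (FDRep k G)) := by
  classical
  set n := Fintype.card G with hn
  set W := FDRep.tensorPow V n with hW
  -- a nonzero vector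
  obtain ⟨v, hv⟩ : ∃ v : V, v ≠ 0 := by
    by_contra h
    push_neg at h
    refine hV ((CategoryTheory.Limits.IsZero.iff_id_eq_zero V).mpr ?_)
    ext x
    simpa using h x
  -- the predicate "g·v is proportional to v"
  set c₀ : G → Prop := fun g => ∃ c : k, V.ρ g v = c • v with hc₀
  -- choice of functionals
  have hφ : ∀ g : G, ∃ f : V →ₗ[k] k, f v ≠ 0 ∧ (¬ c₀ g → f (V.ρ g v) = 0) := by
    intro g
    by_cases hg : c₀ g
    · obtain ⟨f, hf, -⟩ := Submodule.exists_dual_map_eq_bot_of_notMem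
        (p := (⊥ : Submodule k V)) (x := v) (by simpa using hv) inferInstance
      exact ⟨f, hf, fun h => absurd hg h⟩
    · have hvs : v ∉ Submodule.span k {V.ρ g v} := by
        intro hmem
        obtain ⟨c, hc⟩ := Submodule.mem_span_singleton.mp hmem
        have hcne : c ≠ 0 := fun h => hv (by rw [← hc, h, zero_smul])
        exact hg ⟨c⁻¹, ((inv_smul_eq_iff₀ hcne).mpr hc.symm).symm⟩
      obtain ⟨f, hf, hmap⟩ := (Submodule.span k {V.ρ g v}).exists_dual_map_eq_bot_of_notMem
        hvs inferInstance
      refine ⟨f, hf, fun _ => ?_⟩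
      have hm : f (V.ρ g v) ∈ (Submodule.span k {V.ρ g v}).map f :=
        Submodule.mem_map_of_mem (Submodule.mem_span_singleton_self _)
      rw [hmap] at hm
      exact (Submodule.mem_bot k).mp hm
  choose φ hφv hφ0 using hφ
  -- eigenvalues of elements of c₀ are n-th roots of unity
  have heig : ∀ (g : G) (c : k), V.ρ g v = c • v → c ^ n = 1 := by
    intro g c hc
    have hpow : ∀ m : ℕ, V.ρ (g ^ m) v = c ^ m • v := by
      intro m
      induction m with
      | zero => simp [map_one V.ρ]
      | succ m ih =>
        have h1 : V.ρ (g ^ (m + 1)) v = V.ρ (g ^ m) (V.ρ g v) := by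
          rw [pow_succ, map_mul]
          rfl
        rw [h1, hc, map_smul, ih, smul_smul, ← pow_succ']
    have h2 := hpow n
    rw [hn, pow_card_eq_one, map_one V.ρ] at h2
    have h3 : (c ^ n - 1) • v = 0 := by
      rw [sub_smul, one_smul, ← h2]
      simp
    rcases smul_eq_zero.mp h3 with h | h
    · exact sub_eq_zero.mp h
    · exact absurd h hv
  -- the invariant vector
  set u : (W : Type u) := ∑ g : G, tpowEl V (V.ρ g v) n with hu
  have hWρ : ∀ g : G, W.ρ g u = u := by
    intro g
    rw [hu, map_sum]
    have h1 : ∀ h : G, W.ρ g (tpowEl V (V.ρ h v) n) = tpowEl V (V.ρ (g * h) v) n := by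
      intro h
      rw [tpowEl_equivariant]
      congr 1
      rw [map_mul]
      rfl
    simp_rw [h1]
    exact Fintype.sum_equiv (Equiv.mulLeft g) _ _ (fun h => by simp)
  -- the functional
  set fs : Fin n → (V →ₗ[k] k) := φ ∘ (Fintype.equivFin G).symm with hfs
  set F := finDual V n fs with hF
  have hFt : ∀ w : V, F (tpowEl V w n) = ∏ g : G, φ g w := by
    intro w
    rw [hF, finDual_tpowEl]
    exact Fintype.prod_equiv (Fintype.equivFin G).symm _ _ (fun i => rfl)
  set P := ∏ g : G, φ g v with hP
  have hPne : P ≠ 0 := Finset.prod_ne_zero_iff.mpr (fun g _ => hφv g)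
  have hFu : F u = ((Finset.univ.filter c₀).card : k) * P := by
    rw [hu, map_sum, ← Finset.sum_filter_add_sum_filter_not Finset.univ c₀]
    have h1 : ∀ g ∈ Finset.univ.filter c₀, F (tpowEl V (V.ρ g v) n) = P := by
      intro g hg
      obtain ⟨c, hc⟩ := (Finset.mem_filter.mp hg).2
      rw [hFt, hc]
      have h2 : ∀ h : G, φ h (c • v) = c * φ h v := by
        intro h; rw [map_smul, smul_eq_mul]
      calc (∏ h : G, φ h (c • v)) = ∏ h : G, (c * φ h v) := by simp_rw [h2]
        _ = c ^ n * P := by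
            rw [Finset.prod_mul_distrib, Finset.prod_const, Finset.card_univ, hP, hn]
        _ = P := by rw [heig g c hc, one_mul]
    have h2 : ∀ g ∈ Finset.univ.filter (fun g => ¬ c₀ g),
        F (tpowEl V (V.ρ g v) n) = 0 := by
      intro g hg
      rw [hFt]
      exact Finset.prod_eq_zero (Finset.mem_univ g)
        (hφ0 g (Finset.mem_filter.mp hg).2)
    rw [Finset.sum_congr rfl h1, Finset.sum_congr rfl h2, Finset.sum_const,
      Finset.sum_const_zero, add_zero, nsmul_eq_mul]
  have hcard : ((Finset.univ.filter c₀).card : k) ≠ 0 := by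
    have h1 : (1 : G) ∈ Finset.univ.filter c₀ := by
      refine Finset.mem_filter.mpr ⟨Finset.mem_univ _, ⟨1, ?_⟩⟩
      rw [map_one V.ρ, one_smul]
      rfl
    exact Nat.cast_ne_zero.mpr (Finset.card_ne_zero_of_mem h1)
  have hFune : F u ≠ 0 := by
    rw [hFu]; exact mul_ne_zero hcard hPne
  -- the averaged functional
  set r₀ : (W : Type u) →ₗ[k] k := ∑ g : G, F ∘ₗ (W.ρ g) with hr₀
  have hr₀u : r₀ u = (n : k) * F u := by
    rw [hr₀]
    simp only [LinearMap.coe_sum, Finset.sum_apply, LinearMap.comp_apply]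
    simp_rw [hWρ]
    rw [Finset.sum_const, Finset.card_univ, nsmul_eq_mul]
  have hc : (n : k) * F u ≠ 0 := by
    refine mul_ne_zero ?_ hFune
    rw [hn]
    exact Nat.cast_ne_zero.mpr Fintype.card_ne_zero
  have hr₀inv : ∀ (g : G) (x : (W : Type u)), r₀ (W.ρ g x) = r₀ x := by
    intro g x
    rw [hr₀]
    simp only [LinearMap.coe_sum, Finset.sum_apply, LinearMap.comp_apply]
    have h1 : ∀ h : G, F ((W.ρ h) ((W.ρ g) x)) = F (W.ρ (h * g) x) := by
      intro h
      rw [map_mul]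
      rfl
    simp_rw [h1]
    exact Fintype.sum_equiv (Equiv.mulRight g) _ _ (fun h => by simp)
  -- construct the morphisms
  refine ⟨{ hom := ConcreteCategory.ofHom (LinearMap.toSpanSingleton k _ u), comm := ?_ },
    { hom := ConcreteCategory.ofHom (((n : k) * F u)⁻¹ • r₀), comm := ?_ }, ?_⟩
  · intro g
    refine FGModuleCat.hom_ext (LinearMap.ext fun (x : k) => ?_)
    show (x : k) • u = W.ρ g ((x : k) • u)
    rw [map_smul, hWρ]
  · intro g
    ext (x : (W : Type u))
    show (((n : k) * F u)⁻¹ • r₀) (W.ρ g x) = ((n : k) * F u)⁻¹ • r₀ x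
    rw [LinearMap.smul_apply, hr₀inv]
  · refine Action.Hom.ext (FGModuleCat.hom_ext (LinearMap.ext fun (x : k) => ?_))
    show (((n : k) * F u)⁻¹ • r₀) ((x : k) • u) = x
    rw [LinearMap.smul_apply, map_smul, hr₀u, smul_eq_mul, smul_eq_mul,
      mul_comm, mul_assoc, mul_inv_cancel₀ hc, mul_one]
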